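/- arXiv:1104.1135 — 5 statements merged into one kernel-verified Lean document; each statement's English description precedes it below -/
import Mathlib

section
/- Let M be a finite set of vectors in 𝔽₂^n that contains a basis of 𝔽₂^n, and suppose every vector of M has at most r nonzero coordinates. If k ≥ 1 is an integer and n ≥ r(k-1)+1, then there exists a subset K ⊆ M of k vectors such that K is M-sum-free. -/
open scoped Classical BigOperators

/-- If `M ⊆ 𝔽₂ⁿ` contains a basis, each vector of `M` has at most `r` nonzero
coordinates, `k ≥ 1` and `n ≥ r(k-1)+1`, then `M` has an `M`-sum-free subset of
size `k`. -/
theorem stmt4 (n r k : ℕ) (hk : 1 ≤ k) (hn : r * (k - 1) + 1 ≤ n)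
    (M : Finset (Fin n → ZMod 2))
    (hspan : Submodule.span (ZMod 2) (M : Set (Fin n → ZMod 2)) = ⊤)
    (hr : ∀ v ∈ M, (Finset.univ.filter fun i => v i ≠ 0).card ≤ r) :
    ∃ K ⊆ M, K.card = k ∧ ∀ T ⊆ K, 2 ≤ T.card → (∑ v ∈ T, v) ∉ M := by
  classical
  set onev : Fin n → ZMod 2 := fun _ => 1 with honev
  have hmem : onev ∈ Submodule.span (ZMod 2) (M : Set (Fin n → ZMod 2)) := by
    rw [hspan]; trivial
  rw [Submodule.mem_span_set] at hmem
  obtain ⟨c, hcsupp, hcsum⟩ := hmem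
  have h2 : ∀ a : ZMod 2, a ≠ 0 → a = 1 := by decide
  have hS0sum : ∑ v ∈ c.support, v = onev := by
    rw [← hcsum, Finsupp.sum]
    apply Finset.sum_congr rfl
    intro v hv
    rw [h2 (c v) (Finsupp.mem_support_iff.mp hv), one_smul]
  have hS0sub : c.support ⊆ M := by
    intro x hx; exact_mod_cast hcsupp hx
  set 𝒮 := M.powerset.filter (fun S => ∑ v ∈ S, v = onev) with h𝒮
  have hS0 : c.support ∈ 𝒮 := by
    simp only [h𝒮, Finset.mem_filter, Finset.mem_powerset]
    exact ⟨hS0sub, hS0sum⟩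
  obtain ⟨K₀, hK₀mem, hK₀min⟩ := Finset.exists_min_image 𝒮 Finset.card ⟨_, hS0⟩
  simp only [h𝒮, Finset.mem_filter, Finset.mem_powerset] at hK₀mem
  obtain ⟨hK₀M, hK₀sum⟩ := hK₀mem
  have hadd : ∀ x : Fin n → ZMod 2, x + x = 0 := by
    intro x; funext i
    have h22 : ∀ a : ZMod 2, a + a = 0 := by decide
    exact h22 (x i)
  -- K₀ is sum-free
  have hfree : ∀ T ⊆ K₀, 2 ≤ T.card → (∑ v ∈ T, v) ∉ M := by
    intro T hT hTcard hsM
    set s := ∑ v ∈ T, v with hs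
    have hsdiff : ∑ v ∈ K₀ \ T, v = onev + s := by
      have h0 := Finset.sum_sdiff (f := fun v => v) hT
      rw [hK₀sum] at h0
      rw [← hs] at h0
      calc ∑ v ∈ K₀ \ T, v = ∑ v ∈ K₀ \ T, v + (s + s) := by rw [hadd s, add_zero]
        _ = (∑ v ∈ K₀ \ T, v + s) + s := by rw [add_assoc]
        _ = onev + s := by rw [h0]
    by_cases hcase : s ∈ K₀ \ T
    · set S' := (K₀ \ T).erase s with hS'
      have hsub : S' ⊆ M := by
        intro x hx
        exact hK₀M (Finset.sdiff_subset (Finset.erase_subset _ _ hx))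
      have h1 : ∑ v ∈ S', v + s = onev + s := by
        rw [hS', Finset.sum_erase_add _ _ hcase]
        exact hsdiff
      have hsum' : ∑ v ∈ S', v = onev := by
        calc ∑ v ∈ S', v = ∑ v ∈ S', v + (s + s) := by rw [hadd s, add_zero]
          _ = (∑ v ∈ S', v + s) + s := by rw [add_assoc]
          _ = (onev + s) + s := by rw [h1]
          _ = onev + (s + s) := by rw [add_assoc]
          _ = onev := by rw [hadd s, add_zero]
      have hmem' : S' ∈ 𝒮 := by
        simp only [h𝒮, Finset.mem_filter, Finset.mem_powerset]
        exact ⟨hsub, hsum'⟩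
      have hcard' := hK₀min S' hmem'
      have e1 : S'.card = (K₀ \ T).card - 1 := Finset.card_erase_of_mem hcase
      have e3 : 1 ≤ (K₀ \ T).card := Finset.card_pos.mpr ⟨s, hcase⟩
      have e4 : (K₀ \ T).card = K₀.card - T.card := Finset.card_sdiff_of_subset hT
      have e5 : T.card ≤ K₀.card := Finset.card_le_card hT
      omega
    · set S' := insert s (K₀ \ T) with hS'
      have hsub : S' ⊆ M := by
        intro x hx
        rcases Finset.mem_insert.mp hx with h | h
        · rw [h]; exact hsM
        · exact hK₀M (Finset.sdiff_subset h)
      have hsum' : ∑ v ∈ S', v = onev := by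
        rw [hS', Finset.sum_insert hcase, hsdiff]
        calc s + (onev + s) = onev + (s + s) := by
              rw [add_comm s (onev + s), add_assoc]
          _ = onev := by rw [hadd s, add_zero]
      have hmem' : S' ∈ 𝒮 := by
        simp only [h𝒮, Finset.mem_filter, Finset.mem_powerset]
        exact ⟨hsub, hsum'⟩
      have hcard' := hK₀min S' hmem'
      have e1 : S'.card = (K₀ \ T).card + 1 := Finset.card_insert_of_notMem hcase
      have e4 : (K₀ \ T).card = K₀.card - T.card := Finset.card_sdiff_of_subset hT
      have e5 : T.card ≤ K₀.card := Finset.card_le_card hT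
      omega
  -- K₀ covers all coordinates, hence k ≤ K₀.card
  have hcover : (Finset.univ : Finset (Fin n)) ⊆
      K₀.biUnion (fun v => Finset.univ.filter (fun i => v i ≠ 0)) := by
    intro i _
    have h1 : (∑ v ∈ K₀, v) i = 1 := by rw [hK₀sum]
    rw [Finset.sum_apply] at h1
    have hne : ∑ v ∈ K₀, v i ≠ 0 := by rw [h1]; exact one_ne_zero
    obtain ⟨v, hv, hvi⟩ := Finset.exists_ne_zero_of_sum_ne_zero hne
    exact Finset.mem_biUnion.mpr ⟨v, hv, Finset.mem_filter.mpr ⟨Finset.mem_univ i, hvi⟩⟩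
  have hcount : n ≤ K₀.card * r := by
    calc n = (Finset.univ : Finset (Fin n)).card := (Finset.card_fin n).symm
      _ ≤ (K₀.biUnion fun v => Finset.univ.filter (fun i => v i ≠ 0)).card :=
          Finset.card_le_card hcover
      _ ≤ ∑ v ∈ K₀, (Finset.univ.filter (fun i => v i ≠ 0)).card :=
          Finset.card_biUnion_le
      _ ≤ ∑ _v ∈ K₀, r := Finset.sum_le_sum (fun v hv => hr v (hK₀M hv))
      _ = K₀.card * r := by rw [Finset.sum_const, smul_eq_mul]
  have hkcard : k ≤ K₀.card := by
    have h1 : r * (k - 1) < K₀.card * r :=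
      lt_of_lt_of_le (lt_of_lt_of_le (Nat.lt_succ_self _) hn) hcount
    rw [mul_comm K₀.card r] at h1
    have h2' := Nat.lt_of_mul_lt_mul_left h1
    omega
  obtain ⟨K, hKsub, hKcard⟩ := Finset.exists_subset_card_eq hkcard
  exact ⟨K, fun x hx => hK₀M (hKsub hx), hKcard,
    fun T hT h2T => hfree T (hT.trans hKsub) h2T⟩
end

section
/- For every integers r ≥ 1, k ≥ 2 and n = r(k-1), there exists an irreducible system S of equations each with at most r variables, all weights 1, on n variables, whose maximum excess is exactly k-1. Concretely, partition [n] into k-1 sets N_1,...,N_{k-1} of size r and take the equations ∏_{i∈I} x_i = -1 of weight 1 for every nonempty I ⊆ N_t, t ∈ [k-1]; this system has maximum excess k-1. -/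
open scoped Classical BigOperators

lemma sum_erase_empty {n : ℕ} (s : Finset (Fin n)) (x : Fin n → ℝ) :
    ∑ I ∈ s.powerset.erase ∅, -(∏ i ∈ I, x i) = 1 - ∏ i ∈ s, (x i + 1) := by
  have hmem : (∅ : Finset (Fin n)) ∈ s.powerset := Finset.empty_mem_powerset s
  have h1 : ∑ I ∈ s.powerset.erase ∅, -(∏ i ∈ I, x i)
      = (∑ I ∈ s.powerset, -(∏ i ∈ I, x i)) - -(∏ i ∈ (∅ : Finset (Fin n)), x i) :=
    Finset.sum_erase_eq_sub hmem
  have h2 : ∑ I ∈ s.powerset, (∏ i ∈ I, x i) = ∏ i ∈ s, (x i + 1) := by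
    rw [Finset.prod_add]
    exact (Finset.sum_congr rfl fun t ht => by simp)
  have h3 : ∑ I ∈ s.powerset, -(∏ i ∈ I, x i) = -∏ i ∈ s, (x i + 1) := by
    rw [← h2, Finset.sum_neg_distrib]
  rw [h1, h3]
  simp
  ring

/-- Sharpness example: with `n = r(k-1)` and `[n]` partitioned into `k-1` sets of
size `r`, the system of all equations `∏_{i∈I} x_i = -1` for `∅ ≠ I ⊆ N_t` has
maximum excess exactly `k-1`. -/
theorem stmt9 (r k : ℕ) (hr : 1 ≤ r) (hk : 2 ≤ k) (n : ℕ) (hn : n = r * (k - 1))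
    (N : Fin (k - 1) → Finset (Fin n))
    (hcard : ∀ t, (N t).card = r)
    (hdisj : ∀ t t', t ≠ t' → Disjoint (N t) (N t'))
    (hcover : Finset.univ.biUnion N = Finset.univ) :
    (∀ x : Fin n → ℝ, (∀ i, x i = 1 ∨ x i = -1) →
        ∑ t, ∑ I ∈ (N t).powerset.erase ∅, -(∏ i ∈ I, x i) ≤ (k : ℝ) - 1) ∧
    (∃ x : Fin n → ℝ, (∀ i, x i = 1 ∨ x i = -1) ∧
        ∑ t, ∑ I ∈ (N t).powerset.erase ∅, -(∏ i ∈ I, x i) = (k : ℝ) - 1) := by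
  have hcast : ((k : ℝ) - 1) = ((k - 1 : ℕ) : ℝ) := by
    have : (1 : ℕ) ≤ k := le_trans (by norm_num) hk
    push_cast [Nat.cast_sub this]
    ring
  constructor
  · intro x hx
    have hb : ∀ t : Fin (k - 1), ∑ I ∈ (N t).powerset.erase ∅, -(∏ i ∈ I, x i) ≤ 1 := by
      intro t
      rw [sum_erase_empty]
      have : (0 : ℝ) ≤ ∏ i ∈ N t, (x i + 1) := by
        apply Finset.prod_nonneg
        intro i _
        rcases hx i with h | h <;> rw [h] <;> norm_num
      linarith
    calc ∑ t, ∑ I ∈ (N t).powerset.erase ∅, -(∏ i ∈ I, x i)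
        ≤ ∑ _t : Fin (k - 1), (1 : ℝ) := Finset.sum_le_sum fun t _ => hb t
      _ = ((k - 1 : ℕ) : ℝ) := by simp
      _ = (k : ℝ) - 1 := hcast.symm
  · refine ⟨fun _ => -1, fun i => Or.inr rfl, ?_⟩
    have hb : ∀ t : Fin (k - 1),
        ∑ I ∈ (N t).powerset.erase ∅, -(∏ i ∈ I, (fun _ => (-1 : ℝ)) i) = 1 := by
      intro t
      rw [sum_erase_empty]
      have hne : (N t).Nonempty := Finset.card_pos.mp (by rw [hcard t]; exact hr)
      obtain ⟨a, ha⟩ := hne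
      rw [Finset.prod_eq_zero ha (by norm_num)]
      norm_num
    rw [Finset.sum_congr rfl fun t _ => hb t]
    simp [hcast]
end

section
/- Every connected graph G with n vertices and m edges contains a bipartite subgraph with at least m/2 + (n-1)/4 edges. Equivalently, there is a 2-coloring c : V → {-1,1} such that the number of edges uv with c(u) ≠ c(v) is at least m/2 + (n-1)/4. -/
open scoped Classical BigOperators

set_option linter.unusedSectionVars false
set_option maxHeartbeats 1000000

namespace EE

variable {V : Type*} [Fintype V] (G : SimpleGraph V)

noncomputable def ES (s : Finset V) : Finset (Sym2 V) :=
  G.edgeFinset.filter fun e => ∀ v ∈ e, v ∈ s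

noncomputable def mE (s : Finset V) : ℕ := (ES G s).card

def cutP (c : V → ℤ) (e : Sym2 V) : Prop := ∀ u v : V, e = s(u, v) → c u ≠ c v

noncomputable def cutF (c : V → ℤ) (s : Finset V) : ℕ :=
  ((ES G s).filter (cutP c)).card

lemma cutP_iff (c : V → ℤ) (a b : V) : cutP c s(a, b) ↔ c a ≠ c b := by
  constructor
  · intro h; exact h a b rfl
  · intro h u v huv
    rw [Sym2.eq_iff] at huv
    rcases huv with ⟨ha, hb⟩ | ⟨ha, hb⟩
    · rw [← ha, ← hb]; exact h
    · rw [← ha, ← hb]; exact fun hh => h hh.symm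

lemma mem_ES {s : Finset V} {e : Sym2 V} :
    e ∈ ES G s ↔ e ∈ G.edgeFinset ∧ ∀ v ∈ e, v ∈ s := Finset.mem_filter

lemma sym2_exists (e : Sym2 V) : ∃ a b, e = s(a, b) := by
  induction e using Sym2.ind with
  | _ a b => exact ⟨a, b, rfl⟩

/-- Splitting the edges inside `s` at a vertex `x ∈ s`, refined by a predicate `p`. -/
lemma split_general (s : Finset V) (x : V) (hx : x ∈ s) (p : Sym2 V → Prop) :
    ((ES G s).filter p).card
      = ((ES G (s.erase x)).filter p).card
        + ((s.erase x).filter fun y => G.Adj x y ∧ p s(x, y)).card := by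
  have hsplit := Finset.card_filter_add_card_filter_not
    (s := (ES G s).filter p) (p := fun e => x ∈ e)
  have h1 : ((ES G s).filter p).filter (fun e => ¬ x ∈ e)
      = (ES G (s.erase x)).filter p := by
    ext e
    simp only [Finset.mem_filter, mem_ES (G := G)]
    constructor
    · rintro ⟨⟨⟨he, hin⟩, hp⟩, hxe⟩
      exact ⟨⟨he, fun v hv => Finset.mem_erase.2 ⟨fun h => hxe (h ▸ hv), hin v hv⟩⟩, hp⟩
    · rintro ⟨⟨he, hin⟩, hp⟩
      refine ⟨⟨⟨he, fun v hv => Finset.mem_of_mem_erase (hin v hv)⟩, hp⟩, fun hxe => ?_⟩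
      exact (Finset.notMem_erase x s) (hin x hxe)
  have h2 : ((s.erase x).filter fun y => G.Adj x y ∧ p s(x, y)).card
      = (((ES G s).filter p).filter (fun e => x ∈ e)).card := by
    refine Finset.card_bij (fun y _ => s(x, y)) ?_ ?_ ?_
    · intro y hy
      rcases Finset.mem_filter.1 hy with ⟨hy1, hy2, hy3⟩
      refine Finset.mem_filter.2 ⟨Finset.mem_filter.2 ⟨(mem_ES (G := G)).2 ⟨?_, ?_⟩, hy3⟩, ?_⟩
      · exact SimpleGraph.mem_edgeFinset.2 hy2
      · intro v hv
        rcases Sym2.mem_iff.1 hv with rfl | rfl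
        · exact hx
        · exact Finset.mem_of_mem_erase hy1
      · exact Sym2.mem_mk_left x y
    · intro y1 hy1 y2 hy2 heq
      rcases Sym2.eq_iff.1 heq with ⟨_, h⟩ | ⟨h1', h2'⟩
      · exact h
      · exact absurd h2' (Finset.mem_erase.1 (Finset.mem_of_mem_filter _ hy1)).1
    · intro e he
      obtain ⟨a, b, rfl⟩ := sym2_exists e
      rcases Finset.mem_filter.1 he with ⟨hef, hxe⟩
      rcases Finset.mem_filter.1 hef with ⟨hes, hp⟩
      rcases (mem_ES (G := G)).1 hes with ⟨hedge, hin⟩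
      have hadj : G.Adj a b := (G.mem_edgeSet).1 (SimpleGraph.mem_edgeFinset.1 hedge)
      rcases Sym2.mem_iff.1 hxe with h | h
      · subst h
        refine ⟨b, ?_, rfl⟩
        exact Finset.mem_filter.2
          ⟨Finset.mem_erase.2 ⟨hadj.ne', hin b (Sym2.mem_mk_right _ b)⟩, hadj, hp⟩
      · subst h
        refine ⟨a, ?_, ?_⟩
        · refine Finset.mem_filter.2
            ⟨Finset.mem_erase.2 ⟨hadj.ne, hin a (Sym2.mem_mk_left a _)⟩, hadj.symm, ?_⟩
          rw [Sym2.eq_swap]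
          exact hp
        · exact Sym2.eq_swap
  rw [h1, ← h2] at hsplit
  omega

lemma mE_split (s : Finset V) (x : V) (hx : x ∈ s) :
    mE G s = mE G (s.erase x) + ((s.erase x).filter (G.Adj x)).card := by
  have h := split_general G s x hx (fun _ => True)
  simp only [Finset.filter_true, and_true] at h
  exact h

lemma cut_split (c : V → ℤ) (s : Finset V) (x : V) (hx : x ∈ s) :
    cutF G c s = cutF G c (s.erase x)
      + (((s.erase x).filter (G.Adj x)).filter fun y => c x ≠ c y).card := by
  have h := split_general G s x hx (cutP c)
  have h2 : ((s.erase x).filter fun y => G.Adj x y ∧ cutP c s(x, y))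
      = ((s.erase x).filter (G.Adj x)).filter fun y => c x ≠ c y := by
    rw [Finset.filter_filter]
    apply Finset.filter_congr
    intro y _
    rw [cutP_iff]
  rw [h2] at h
  exact h

lemma cutF_update (c : V → ℤ) (t : Finset V) (x : V) (σ : ℤ) (hx : x ∉ t) :
    cutF G (Function.update c x σ) t = cutF G c t := by
  unfold cutF
  congr 1
  apply Finset.filter_congr
  intro e he
  obtain ⟨a, b, rfl⟩ := sym2_exists e
  rcases (mem_ES (G := G)).1 he with ⟨_, hin⟩
  have ha : a ≠ x := fun h => hx (h ▸ hin a (Sym2.mem_mk_left a b))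
  have hb : b ≠ x := fun h => hx (h ▸ hin b (Sym2.mem_mk_right a b))
  rw [cutP_iff, cutP_iff, Function.update_of_ne ha, Function.update_of_ne hb]

lemma pm_card {c : V → ℤ} (hc : ∀ v, c v = 1 ∨ c v = -1) (N : Finset V) :
    (N.filter fun y => c y = 1).card + (N.filter fun y => c y = -1).card = N.card := by
  have h := Finset.card_filter_add_card_filter_not (s := N) (p := fun y => c y = 1)
  have h2 : N.filter (fun y => ¬ c y = 1) = N.filter (fun y => c y = -1) := by
    apply Finset.filter_congr
    intro y _
    rcases hc y with h1 | h1 <;> simp [h1]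
  rw [h2] at h
  exact h

lemma capture_neg {c : V → ℤ} (hc : ∀ v, c v = 1 ∨ c v = -1) (N : Finset V) :
    N.filter (fun y => (-1 : ℤ) ≠ c y) = N.filter (fun y => c y = 1) := by
  apply Finset.filter_congr
  intro y _
  rcases hc y with h1 | h1 <;> simp [h1]

lemma capture_pos {c : V → ℤ} (hc : ∀ v, c v = 1 ∨ c v = -1) (N : Finset V) :
    N.filter (fun y => (1 : ℤ) ≠ c y) = N.filter (fun y => c y = -1) := by
  apply Finset.filter_congr
  intro y _
  rcases hc y with h1 | h1 <;> simp [h1]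

lemma ES_small (s : Finset V) (h : s.card ≤ 1) : ES G s = ∅ := by
  rw [Finset.eq_empty_iff_forall_notMem]
  intro e he
  obtain ⟨a, b, rfl⟩ := sym2_exists e
  rcases (mem_ES (G := G)).1 he with ⟨hedge, hin⟩
  have hadj : G.Adj a b := (G.mem_edgeSet).1 (SimpleGraph.mem_edgeFinset.1 hedge)
  have : 1 < s.card := Finset.one_lt_card.2
    ⟨a, hin a (Sym2.mem_mk_left a b), b, hin b (Sym2.mem_mk_right a b), hadj.ne⟩
  omega



def stepR (s : Finset V) (p q : V) : Prop := p ∈ s ∧ q ∈ s ∧ G.Adj p q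

def Linked (s : Finset V) : Prop :=
  ∀ a ∈ s, ∀ b ∈ s, Relation.ReflTransGen (stepR G s) a b

lemma rtg_symm {α : Type*} {R : α → α → Prop} (hsym : ∀ a b, R a b → R b a) {a b : α}
    (h : Relation.ReflTransGen R a b) : Relation.ReflTransGen R b a := by
  induction h with
  | refl => exact Relation.ReflTransGen.refl
  | tail _ hstep ih => exact (Relation.ReflTransGen.single (hsym _ _ hstep)).trans ih

def reachN (s : Finset V) (r : V) : ℕ → V → Prop
  | 0 => fun z => z = r
  | (n+1) => fun z => ∃ w, reachN s r n w ∧ stepR G s w z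

lemma reachN_exists {s : Finset V} {r z : V} (h : Relation.ReflTransGen (stepR G s) r z) :
    ∃ n, reachN G s r n z := by
  induction h with
  | refl => exact ⟨0, rfl⟩
  | tail _ hstep ih =>
      obtain ⟨n, hn⟩ := ih
      exact ⟨n + 1, ⟨_, hn, hstep⟩⟩

noncomputable def dN (s : Finset V) (r z : V) : ℕ := sInf {n | reachN G s r n z}

lemma dN_spec {s : Finset V} {r z : V} (h : Relation.ReflTransGen (stepR G s) r z) :
    reachN G s r (dN G s r z) z :=
  Nat.sInf_mem (reachN_exists G h)

lemma dN_le {s : Finset V} {r z : V} {n : ℕ} (h : reachN G s r n z) : dN G s r z ≤ n :=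
  Nat.sInf_le h

lemma dN_self (s : Finset V) (r : V) : dN G s r r = 0 :=
  Nat.le_zero.1 (dN_le G (by rfl : reachN G s r 0 r))

lemma dN_eq_zero {s : Finset V} {r z : V} (h : Relation.ReflTransGen (stepR G s) r z)
    (hz : dN G s r z = 0) : z = r := by
  have := dN_spec G h
  rwa [hz] at this

lemma dN_pred {s : Finset V} {r z : V} (h : Relation.ReflTransGen (stepR G s) r z)
    (hz : z ≠ r) : ∃ w, stepR G s w z ∧ dN G s r w + 1 = dN G s r z := by
  have hspec := dN_spec G h
  rcases hn : dN G s r z with _ | n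
  · exact absurd (dN_eq_zero G h hn) hz
  · rw [hn] at hspec
    obtain ⟨w, hw, hstep⟩ := hspec
    refine ⟨w, hstep, ?_⟩
    have h1 : dN G s r w ≤ n := dN_le G hw
    -- also dN z ≤ dN w + 1
    have hnew : {m | reachN G s r m w}.Nonempty := ⟨n, hw⟩
    have hww : reachN G s r (dN G s r w) w := Nat.sInf_mem hnew
    have h2 : dN G s r z ≤ dN G s r w + 1 := dN_le G ⟨w, hww, hstep⟩
    omega

/-- Key structural lemma: a linked set with at least two vertices has either a max-level
vertex of odd degree whose removal keeps it linked, or an adjacent pair whose removal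
keeps it linked. -/
lemma struct (s : Finset V) (hL : Linked G s) (hcard : 2 ≤ s.card) :
    (∃ x ∈ s, Odd ((s.erase x).filter (G.Adj x)).card ∧ Linked G (s.erase x)) ∨
    (∃ x ∈ s, ∃ u ∈ s.erase x, G.Adj x u ∧ Linked G ((s.erase x).erase u)) := by
  obtain ⟨r, hr⟩ := Finset.card_pos.1 (show 0 < s.card by omega)
  set d : V → ℕ := dN G s r with hd
  have hreach : ∀ z ∈ s, Relation.ReflTransGen (stepR G s) r z := fun z hz => hL r hr z hz
  have hne : (s.image d).Nonempty := ⟨d r, Finset.mem_image_of_mem d hr⟩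
  set D : ℕ := (s.image d).max' hne with hD
  have hub : ∀ z ∈ s, d z ≤ D := fun z hz =>
    Finset.le_max' _ _ (Finset.mem_image_of_mem d hz)
  have hdr : d r = 0 := dN_self G s r
  have hD1 : 1 ≤ D := by
    obtain ⟨z, hz, hzr⟩ := Finset.exists_mem_ne (s := s) (show 1 < s.card by omega) r
    have : d z ≠ 0 := fun h0 => hzr (dN_eq_zero G (hreach z hz) h0)
    have := hub z hz
    omega
  have hmaxr : ∀ z, d z = D → z ≠ r := by
    intro z hz h
    rw [h, hdr] at hz
    omega
  -- predecessor in s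
  have hpred : ∀ z ∈ s, z ≠ r → ∃ w ∈ s, G.Adj w z ∧ d w + 1 = d z := by
    intro z hz hzr
    obtain ⟨w, hstep, hdw⟩ := dN_pred G (hreach z hz) hzr
    exact ⟨w, hstep.1, hstep.2.2, hdw⟩
  by_cases hA : ∃ x ∈ s, d x = D ∧ Odd ((s.erase x).filter (G.Adj x)).card
  · obtain ⟨x, hx, hdx, hodd⟩ := hA
    left
    refine ⟨x, hx, hodd, ?_⟩
    have hxr : x ≠ r := hmaxr x hdx
    have reach' : ∀ n, ∀ z ∈ s.erase x, d z ≤ n →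
        Relation.ReflTransGen (stepR G (s.erase x)) r z := by
      intro n
      induction n with
      | zero =>
          intro z hz hdz
          have : z = r := dN_eq_zero G (hreach z (Finset.mem_of_mem_erase hz)) (Nat.le_zero.1 hdz)
          rw [this]
      | succ n ih =>
          intro z hz hdz
          by_cases hzr : z = r
          · rw [hzr]
          · obtain ⟨w, hw, hadj, hdw⟩ := hpred z (Finset.mem_of_mem_erase hz) hzr
            have hwx : w ≠ x := by
              intro h
              rw [h, hdx] at hdw
              have := hub z (Finset.mem_of_mem_erase hz)
              omega
            have hw' : w ∈ s.erase x := Finset.mem_erase.2 ⟨hwx, hw⟩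
            exact (ih w hw' (by omega)).tail ⟨hw', hz, hadj⟩
    have hrin : r ∈ s.erase x := Finset.mem_erase.2 ⟨fun h => hxr h.symm, hr⟩
    intro a ha b hb
    have hsym : ∀ p q, stepR G (s.erase x) p q → stepR G (s.erase x) q p :=
      fun p q h => ⟨h.2.1, h.1, h.2.2.symm⟩
    exact (rtg_symm hsym (reach' _ a ha (le_refl _))).trans (reach' _ b hb (le_refl _))
  · by_cases hB : ∃ x ∈ s, ∃ y ∈ s, d x = D ∧ d y = D ∧ G.Adj x y
    · obtain ⟨x, hx, y, hy, hdx, hdy, hadj⟩ := hB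
      right
      refine ⟨x, hx, y, Finset.mem_erase.2 ⟨hadj.ne', hy⟩, hadj, ?_⟩
      have hxr : x ≠ r := hmaxr x hdx
      have hyr : y ≠ r := hmaxr y hdy
      have reach' : ∀ n, ∀ z ∈ (s.erase x).erase y, d z ≤ n →
          Relation.ReflTransGen (stepR G ((s.erase x).erase y)) r z := by
        intro n
        induction n with
        | zero =>
            intro z hz hdz
            have : z = r := dN_eq_zero G
              (hreach z (Finset.mem_of_mem_erase (Finset.mem_of_mem_erase hz))) (Nat.le_zero.1 hdz)
            rw [this]
        | succ n ih =>
            intro z hz hdz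
            by_cases hzr : z = r
            · rw [hzr]
            · have hzs : z ∈ s := Finset.mem_of_mem_erase (Finset.mem_of_mem_erase hz)
              obtain ⟨w, hw, hadjw, hdw⟩ := hpred z hzs hzr
              have hzD : d z ≤ D := hub z hzs
              have hwx : w ≠ x := by
                intro h; rw [h, hdx] at hdw; omega
              have hwy : w ≠ y := by
                intro h; rw [h, hdy] at hdw; omega
              have hw' : w ∈ (s.erase x).erase y :=
                Finset.mem_erase.2 ⟨hwy, Finset.mem_erase.2 ⟨hwx, hw⟩⟩
              exact (ih w hw' (by omega)).tail ⟨hw', hz, hadjw⟩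
      have hrin : r ∈ (s.erase x).erase y :=
        Finset.mem_erase.2 ⟨fun h => hyr h.symm, Finset.mem_erase.2 ⟨fun h => hxr h.symm, hr⟩⟩
      intro a ha b hb
      have hsym : ∀ p q, stepR G ((s.erase x).erase y) p q → stepR G ((s.erase x).erase y) q p :=
        fun p q h => ⟨h.2.1, h.1, h.2.2.symm⟩
      exact (rtg_symm hsym (reach' _ a ha (le_refl _))).trans (reach' _ b hb (le_refl _))
    · -- Case C
      push_neg at hA hB
      obtain ⟨x, hx, hdx⟩ : ∃ x ∈ s, d x = D := by
        obtain ⟨x, hx, hdx⟩ := Finset.mem_image.1 (Finset.max'_mem _ hne)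
        exact ⟨x, hx, hdx⟩
      have hxr : x ≠ r := hmaxr x hdx
      have heven : ∀ z ∈ s, d z = D → Even ((s.erase z).filter (G.Adj z)).card := by
        intro z hz hdz
        exact Nat.not_odd_iff_even.1 (hA z hz hdz)
      have hnbrD : ∀ z ∈ s, d z = D → ∀ w ∈ s, G.Adj z w → d w + 1 ≤ D := by
        intro z hz hdz w hw hadj
        have h1 : d w ≤ D := hub w hw
        rcases Nat.lt_or_ge (d w) D with h | h
        · omega
        · exact absurd hadj (hB z hz w hw hdz (by omega))
      -- the predecessor u of x
      obtain ⟨u, hu, hadjux, hdu⟩ := hpred x hx hxr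
      have hdu' : d u + 1 = D := by rw [← hdx]; exact hdu
      -- each max vertex has at least one neighbor (its predecessor), and even degree ≥ 2
      have hdeg2 : ∀ z ∈ s, d z = D → 2 ≤ ((s.erase z).filter (G.Adj z)).card := by
        intro z hz hdz
        obtain ⟨w, hw, hadjw, _⟩ := hpred z hz (hmaxr z hdz)
        have hwin : w ∈ (s.erase z).filter (G.Adj z) :=
          Finset.mem_filter.2 ⟨Finset.mem_erase.2 ⟨hadjw.ne, hw⟩, hadjw.symm⟩
        have h1 : 1 ≤ ((s.erase z).filter (G.Adj z)).card := Finset.card_pos.2 ⟨w, hwin⟩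
        obtain ⟨k, hk⟩ := heven z hz hdz
        omega
      have hD2 : 2 ≤ D := by
        by_contra h
        have hD1' : D = 1 := by omega
        -- then all neighbors of x are r, so degree is ≤ 1, contradicting evenness and ≥ 2
        have : ∀ w ∈ (s.erase x).filter (G.Adj x), w = r := by
          intro w hw
          rcases Finset.mem_filter.1 hw with ⟨hw1, hw2⟩
          have := hnbrD x hx hdx w (Finset.mem_of_mem_erase hw1) hw2
          have : d w = 0 := by omega
          exact dN_eq_zero G (hreach w (Finset.mem_of_mem_erase hw1)) this
        have hsub : (s.erase x).filter (G.Adj x) ⊆ {r} := by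
          intro w hw
          exact Finset.mem_singleton.2 (this w hw)
        have hle := Finset.card_le_card hsub
        rw [Finset.card_singleton] at hle
        have := hdeg2 x hx hdx
        omega
      have hur : u ≠ r := by
        intro h
        rw [h, hdr] at hdu'
        omega
      right
      refine ⟨x, hx, u, Finset.mem_erase.2 ⟨fun h => (G.irrefl (h ▸ hadjux)), hu⟩,
        hadjux.symm, ?_⟩
      set s'' : Finset V := (s.erase x).erase u with hs''
      have hmem'' : ∀ z, z ∈ s'' ↔ z ∈ s ∧ z ≠ x ∧ z ≠ u := by
        intro z
        simp only [hs'', Finset.mem_erase]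
        tauto
      have claim1 : ∀ n, ∀ z ∈ s, z ≠ u → d z + 1 ≤ D → d z ≤ n →
          Relation.ReflTransGen (stepR G s'') r z := by
        intro n
        induction n with
        | zero =>
            intro z hz _ _ hdz
            have : z = r := dN_eq_zero G (hreach z hz) (Nat.le_zero.1 hdz)
            rw [this]
        | succ n ih =>
            intro z hz hzu hzD hdz
            by_cases hzr : z = r
            · rw [hzr]
            · obtain ⟨w, hw, hadjw, hdw⟩ := hpred z hz hzr
              have hwu : w ≠ u := by
                intro h; rw [h] at hdw; omega
              have hwx : w ≠ x := by
                intro h; rw [h, hdx] at hdw; omega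
              have hzx : z ≠ x := by
                intro h; rw [h, hdx] at hzD; omega
              have hw'' : w ∈ s'' := (hmem'' w).2 ⟨hw, hwx, hwu⟩
              have hz'' : z ∈ s'' := (hmem'' z).2 ⟨hz, hzx, hzu⟩
              exact (ih w hw hwu (by omega) (by omega)).tail ⟨hw'', hz'', hadjw⟩
      have claim2 : ∀ z ∈ s'', Relation.ReflTransGen (stepR G s'') r z := by
        intro z hz
        obtain ⟨hzs, hzx, hzu⟩ := (hmem'' z).1 hz
        rcases Nat.lt_or_ge (d z) D with h | h
        · exact claim1 (d z) z hzs hzu (by omega) (le_refl _)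
        · have hdz : d z = D := le_antisymm (hub z hzs) h
          -- pick a neighbor of z different from u
          have h2 := hdeg2 z hzs hdz
          obtain ⟨w, hw, hwu⟩ := Finset.exists_mem_ne
            (s := (s.erase z).filter (G.Adj z)) (show _ by omega) u
          rcases Finset.mem_filter.1 hw with ⟨hw1, hw2⟩
          have hws : w ∈ s := Finset.mem_of_mem_erase hw1
          have hwD : d w + 1 ≤ D := hnbrD z hzs hdz w hws hw2
          have hwx : w ≠ x := by
            intro hh; rw [hh, hdx] at hwD; omega
          have hw'' : w ∈ s'' := (hmem'' w).2 ⟨hws, hwx, hwu⟩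
          exact (claim1 (d w) w hws hwu hwD (le_refl _)).tail ⟨hw'', hz, hw2.symm⟩
      have hrin : r ∈ s'' := (hmem'' r).2 ⟨hr, fun h => hxr h.symm, fun h => hur h.symm⟩
      intro a ha b hb
      have hsym : ∀ p q, stepR G s'' p q → stepR G s'' q p :=
        fun p q h => ⟨h.2.1, h.1, h.2.2.symm⟩
      exact (rtg_symm hsym (claim2 a ha)).trans (claim2 b hb)


lemma main : ∀ (n : ℕ) (s : Finset V), s.card ≤ n → Linked G s →
    ∃ c : V → ℤ, (∀ v, c v = 1 ∨ c v = -1) ∧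
      2 * mE G s + s.card ≤ 4 * cutF G c s + 1 := by
  intro n
  induction n with
  | zero =>
      intro s hcard _
      refine ⟨fun _ => 1, fun v => Or.inl rfl, ?_⟩
      have h0 : s.card = 0 := by omega
      have hES : ES G s = ∅ := ES_small G s (by omega)
      have h1 : mE G s = 0 := by rw [mE, hES]; rfl
      have h2 : cutF G (fun _ => 1) s = 0 := by rw [cutF, hES]; rfl
      omega
  | succ n ih =>
      intro s hcard hL
      by_cases hsmall : s.card ≤ 1
      · refine ⟨fun _ => 1, fun v => Or.inl rfl, ?_⟩
        have hES : ES G s = ∅ := ES_small G s hsmall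
        have h1 : mE G s = 0 := by rw [mE, hES]; rfl
        have h2 : cutF G (fun _ => 1) s = 0 := by rw [cutF, hES]; rfl
        omega
      · rcases struct G s hL (by omega) with ⟨x, hx, hodd, hL'⟩ |
          ⟨x, hx, u, hu, hadj, hL''⟩
        · -- odd degree vertex removal
          have hcarde : (s.erase x).card = s.card - 1 := Finset.card_erase_of_mem hx
          obtain ⟨c, hc, hineq⟩ := ih (s.erase x) (by omega) hL'
          set N : Finset V := (s.erase x).filter (G.Adj x) with hN
          set N1 : Finset V := N.filter (fun y => c y = 1) with hN1
          set N2 : Finset V := N.filter (fun y => c y = -1) with hN2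
          have hsum : N1.card + N2.card = N.card := pm_card hc N
          set σ : ℤ := if N2.card ≤ N1.card then -1 else 1 with hσ
          set c' : V → ℤ := Function.update c x σ with hc'def
          have hc' : ∀ v, c' v = 1 ∨ c' v = -1 := by
            intro v
            by_cases hv : v = x
            · rw [hv, hc'def, Function.update_self, hσ]
              split_ifs
              · exact Or.inr rfl
              · exact Or.inl rfl
            · rw [hc'def, Function.update_of_ne hv]
              exact hc v
          have hKeq : N.filter (fun y => c' x ≠ c' y) = N.filter (fun y => σ ≠ c y) := by
            apply Finset.filter_congr
            intro y hy
            have hyx : y ≠ x := (Finset.mem_erase.1 (Finset.mem_of_mem_filter _ hy)).1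
            rw [hc'def, Function.update_self, Function.update_of_ne hyx]
          have hKcard : N.card + 1 ≤ 2 * (N.filter (fun y => c' x ≠ c' y)).card := by
            rw [hKeq]
            obtain ⟨k, hk⟩ := hodd
            rw [hσ]
            split_ifs with h
            · rw [capture_neg hc N, ← hN1]
              omega
            · rw [capture_pos hc N, ← hN2]
              omega
          have hm := mE_split G s x hx
          have hcut := cut_split G c' s x hx
          have hinv : cutF G c' (s.erase x) = cutF G c (s.erase x) :=
            cutF_update G c (s.erase x) x σ (Finset.notMem_erase x s)
          refine ⟨c', hc', ?_⟩
          rw [← hN] at hm hcut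
          rw [hinv] at hcut
          omega
        · -- adjacent pair removal
          have hxu : x ≠ u := hadj.ne
          have hcard' : (s.erase x).card = s.card - 1 := Finset.card_erase_of_mem hx
          have hcard'' : ((s.erase x).erase u).card = (s.erase x).card - 1 :=
            Finset.card_erase_of_mem hu
          have hus : u ∈ s := Finset.mem_of_mem_erase hu
          obtain ⟨c, hc, hineq⟩ := ih ((s.erase x).erase u) (by omega) hL''
          have hxs'' : x ∉ (s.erase x).erase u :=
            fun h => (Finset.notMem_erase x s) (Finset.mem_of_mem_erase h)
          have hus'' : u ∉ (s.erase x).erase u := Finset.notMem_erase u (s.erase x)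
          set a1 : ℕ := (((s.erase x).erase u).filter (G.Adj x) |>.filter
            (fun y => c y = 1)).card with ha1
          set a2 : ℕ := (((s.erase x).erase u).filter (G.Adj x) |>.filter
            (fun y => c y = -1)).card with ha2
          set b1 : ℕ := (((s.erase x).erase u).filter (G.Adj u) |>.filter
            (fun y => c y = 1)).card with hb1
          set b2 : ℕ := (((s.erase x).erase u).filter (G.Adj u) |>.filter
            (fun y => c y = -1)).card with hb2
          have hsumQ : a1 + a2 = (((s.erase x).erase u).filter (G.Adj x)).card :=
            pm_card hc _
          have hsumP : b1 + b2 = (((s.erase x).erase u).filter (G.Adj u)).card :=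
            pm_card hc _
          set σx : ℤ := if a2 + b1 ≤ a1 + b2 then -1 else 1 with hσx
          set σu : ℤ := -σx with hσu
          set c'' : V → ℤ := Function.update (Function.update c u σu) x σx with hc''def
          have hvx : c'' x = σx := by rw [hc''def]; exact Function.update_self _ _ _
          have hvu : c'' u = σu := by
            rw [hc''def, Function.update_of_ne (Ne.symm hxu)]
            exact Function.update_self _ _ _
          have hvother : ∀ y, y ≠ x → y ≠ u → c'' y = c y := by
            intro y h1 h2
            rw [hc''def, Function.update_of_ne h1, Function.update_of_ne h2]
          have hσxval : σx = 1 ∨ σx = -1 := by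
            rw [hσx]; split_ifs
            · exact Or.inr rfl
            · exact Or.inl rfl
          have hc'' : ∀ v, c'' v = 1 ∨ c'' v = -1 := by
            intro v
            by_cases h1 : v = x
            · rw [h1, hvx]; exact hσxval
            · by_cases h2 : v = u
              · rw [h2, hvu, hσu]
                rcases hσxval with h | h <;> rw [h] <;> norm_num
              · rw [hvother v h1 h2]; exact hc v
          have hxu_cut : c'' x ≠ c'' u := by
            rw [hvx, hvu, hσu]
            rcases hσxval with h | h <;> rw [h] <;> norm_num
          -- splitting the edge count
          have hm1 : mE G s = mE G (s.erase x) + ((s.erase x).filter (G.Adj x)).card :=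
            mE_split G s x hx
          have hm2 : mE G (s.erase x) = mE G ((s.erase x).erase u)
              + (((s.erase x).erase u).filter (G.Adj u)).card :=
            mE_split G (s.erase x) u hu
          have huPx : u ∈ (s.erase x).filter (G.Adj x) := Finset.mem_filter.2 ⟨hu, hadj⟩
          have hPQ : ((s.erase x).filter (G.Adj x)).erase u
              = ((s.erase x).erase u).filter (G.Adj x) :=
            by
            ext y
            simp only [Finset.mem_erase, Finset.mem_filter]
            tauto
          have hPxQx : ((s.erase x).filter (G.Adj x)).card
              = (((s.erase x).erase u).filter (G.Adj x)).card + 1 := by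
            have h2 : (((s.erase x).filter (G.Adj x)).erase u).card
                = ((s.erase x).filter (G.Adj x)).card - 1 := Finset.card_erase_of_mem huPx
            rw [hPQ] at h2
            have h3 : 1 ≤ ((s.erase x).filter (G.Adj x)).card := Finset.card_pos.2 ⟨u, huPx⟩
            omega
          have hcut1 : cutF G c'' s = cutF G c'' (s.erase x)
              + (((s.erase x).filter (G.Adj x)).filter fun y => c'' x ≠ c'' y).card :=
            cut_split G c'' s x hx
          have hcut2 : cutF G c'' (s.erase x) = cutF G c'' ((s.erase x).erase u)
              + ((((s.erase x).erase u).filter (G.Adj u)).filter fun y => c'' u ≠ c'' y).card :=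
            cut_split G c'' (s.erase x) u hu
          have hinv : cutF G c'' ((s.erase x).erase u) = cutF G c ((s.erase x).erase u) := by
            rw [hc''def]
            rw [cutF_update G _ ((s.erase x).erase u) x σx hxs'']
            exact cutF_update G c ((s.erase x).erase u) u σu hus''
          -- the capture at x
          have huKX : u ∈ ((s.erase x).filter (G.Adj x)).filter (fun y => c'' x ≠ c'' y) :=
            Finset.mem_filter.2 ⟨huPx, hxu_cut⟩
          have hKXer : ((((s.erase x).filter (G.Adj x)).filter (fun y => c'' x ≠ c'' y)).erase u)
              = (((s.erase x).erase u).filter (G.Adj x)).filter (fun y => σx ≠ c y) := by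
            ext y
            simp only [Finset.mem_erase, Finset.mem_filter]
            constructor
            · rintro ⟨hyu, ⟨⟨hyx, hys⟩, hyadj⟩, hycut⟩
              refine ⟨⟨⟨hyu, hyx, hys⟩, hyadj⟩, ?_⟩
              rwa [hvx, hvother y hyx hyu] at hycut
            · rintro ⟨⟨⟨hyu, hyx, hys⟩, hyadj⟩, hycut⟩
              refine ⟨hyu, ⟨⟨hyx, hys⟩, hyadj⟩, ?_⟩
              rwa [hvx, hvother y hyx hyu]
          have hKXcard : ((((s.erase x).filter (G.Adj x)).filter (fun y => c'' x ≠ c'' y))).card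
              = ((((s.erase x).erase u).filter (G.Adj x)).filter (fun y => σx ≠ c y)).card
                + 1 := by
            have h2 := Finset.card_erase_of_mem huKX
            rw [hKXer] at h2
            have h3 : 1 ≤ (((s.erase x).filter (G.Adj x)).filter
                (fun y => c'' x ≠ c'' y)).card := Finset.card_pos.2 ⟨u, huKX⟩
            omega
          have hKUeq : (((s.erase x).erase u).filter (G.Adj u)).filter (fun y => c'' u ≠ c'' y)
              = (((s.erase x).erase u).filter (G.Adj u)).filter (fun y => σu ≠ c y) := by
            apply Finset.filter_congr
            intro y hy
            have hy'' : y ∈ (s.erase x).erase u := Finset.mem_of_mem_filter _ hy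
            have hyx : y ≠ x := fun h => hxs'' (h ▸ hy'')
            have hyu : y ≠ u := fun h => hus'' (h ▸ hy'')
            rw [hvu, hvother y hyx hyu]
          -- capture bound
          have hcap : (((s.erase x).erase u).filter (G.Adj x)).card
                + (((s.erase x).erase u).filter (G.Adj u)).card ≤
              2 * (((((s.erase x).erase u).filter (G.Adj x)).filter (fun y => σx ≠ c y)).card
                + ((((s.erase x).erase u).filter (G.Adj u)).filter (fun y => σu ≠ c y)).card) := by
            rw [hσu, hσx]
            split_ifs with h
            · rw [show -(-1 : ℤ) = 1 by norm_num]
              rw [capture_neg hc (((s.erase x).erase u).filter (G.Adj x)),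
                capture_pos hc (((s.erase x).erase u).filter (G.Adj u)), ← ha1, ← hb2]
              omega
            · rw [show -(1 : ℤ) = -1 by norm_num]
              rw [capture_pos hc (((s.erase x).erase u).filter (G.Adj x)),
                capture_neg hc (((s.erase x).erase u).filter (G.Adj u)), ← ha2, ← hb1]
              omega
          refine ⟨c'', hc'', ?_⟩
          rw [hKXcard] at hcut1
          rw [hKUeq] at hcut2
          rw [hinv] at hcut2
          omega

lemma linked_univ (hG : G.Connected) : Linked G (Finset.univ : Finset V) := by
  intro a _ b _
  have h := hG.preconnected a b
  rw [SimpleGraph.reachable_iff_reflTransGen] at h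
  exact Relation.ReflTransGen.mono (p := stepR G Finset.univ) (fun p q hpq => ⟨Finset.mem_univ p, Finset.mem_univ q, hpq⟩) _ _ h

end EE

/-- Edwards–Erdős bound: every connected graph with `n` vertices and `m` edges has a
2-coloring with at least `m/2 + (n-1)/4` properly colored edges. -/
theorem stmt12 {V : Type*} [Fintype V] (G : SimpleGraph V) (hG : G.Connected) :
    ∃ c : V → ℤ, (∀ v, c v = 1 ∨ c v = -1) ∧
      (G.edgeFinset.card : ℝ) / 2 + ((Fintype.card V : ℝ) - 1) / 4
        ≤ ((G.edgeFinset.filter fun e => ∀ u v : V, e = s(u, v) → c u ≠ c v).card : ℝ) := by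
  have hne : Nonempty V := hG.nonempty
  obtain ⟨c, hc, hineq⟩ := EE.main G (Finset.univ.card) Finset.univ le_rfl (EE.linked_univ G hG)
  refine ⟨c, hc, ?_⟩
  have hES : EE.ES G Finset.univ = G.edgeFinset := by
    unfold EE.ES
    apply Finset.filter_true_of_mem
    intro e _ v _
    exact Finset.mem_univ v
  have hm : EE.mE G Finset.univ = G.edgeFinset.card := by
    unfold EE.mE
    rw [hES]
  have hcut : EE.cutF G c Finset.univ
      = (G.edgeFinset.filter fun e => ∀ u v : V, e = s(u, v) → c u ≠ c v).card := by
    unfold EE.cutF EE.cutP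
    rw [hES]
    congr 1
    ext e
    simp only [Finset.mem_filter]
  have hn : Finset.univ.card = Fintype.card V := rfl
  rw [hm, hcut, hn] at hineq
  have hineq' : (2 * G.edgeFinset.card + Fintype.card V : ℝ)
      ≤ 4 * ((G.edgeFinset.filter fun e => ∀ u v : V, e = s(u, v) → c u ≠ c v).card : ℝ) + 1 := by
    exact_mod_cast hineq
  linarith
end

section
/- Let G = (V,E) be a connected graph with n vertices and m edges in which each edge e is labeled s_e ∈ {=, ≠}. Then there exists a 2-coloring c : V → {-1,1} such that the number of satisfied edges is at least m/2 + (n-1)/4, where an edge uv labeled = is satisfied if c(u) = c(v) and an edge labeled ≠ is satisfied if c(u) ≠ c(v). -/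
open scoped Classical BigOperators
open Finset
set_option linter.unusedSectionVars false

namespace EE13

variable {V : Type*} [Fintype V]

def RR (G : SimpleGraph V) (S : Finset V) (x y : V) : Prop := G.Adj x y ∧ x ∈ S ∧ y ∈ S

def reach (G : SimpleGraph V) (S : Finset V) : V → V → Prop :=
  Relation.ReflTransGen (RR G S)

def Conn (G : SimpleGraph V) (S : Finset V) : Prop :=
  S.Nonempty ∧ ∀ x ∈ S, ∀ y ∈ S, reach G S x y

def stepN (G : SimpleGraph V) (S : Finset V) : ℕ → V → V → Prop
  | 0, x, y => x = y
  | (n+1), x, y => ∃ z, RR G S x z ∧ stepN G S n z y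

noncomputable def dd (G : SimpleGraph V) (S : Finset V) (x y : V) : ℕ :=
  sInf {n | stepN G S n x y}

noncomputable def deg (G : SimpleGraph V) (S : Finset V) (w : V) : ℕ :=
  ((S.erase w).filter (G.Adj w)).card

variable {G : SimpleGraph V} {S T : Finset V} {x y z b u v w : V}

lemma RR.symm (h : RR G S x y) : RR G S y x := ⟨h.1.symm, h.2.2, h.2.1⟩

lemma reach_mono (hST : S ⊆ T) (h : reach G S x y) : reach G T x y :=
  Relation.ReflTransGen.mono (p := RR G T) (fun _ _ hr => ⟨hr.1, hST hr.2.1, hST hr.2.2⟩) _ _ h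

lemma reach_symm (h : reach G S x y) : reach G S y x := by
  induction h with
  | refl => exact .refl
  | tail _ h2 ih => exact .head h2.symm ih

lemma stepN_tail {n : ℕ} (h : stepN G S n x y) (h2 : RR G S y z) : stepN G S (n+1) x z := by
  induction n generalizing x with
  | zero => exact ⟨z, h ▸ h2, rfl⟩
  | succ n ih => obtain ⟨w, hw, hst⟩ := h; exact ⟨w, hw, ih hst⟩

lemma exists_stepN_of_reach (h : reach G S x y) : ∃ n, stepN G S n x y := by
  induction h with
  | refl => exact ⟨0, rfl⟩
  | tail _ h2 ih => obtain ⟨n, hn⟩ := ih; exact ⟨n+1, stepN_tail hn h2⟩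

lemma reach_of_stepN {n : ℕ} (h : stepN G S n x y) : reach G S x y := by
  induction n generalizing x with
  | zero => exact h ▸ .refl
  | succ n ih => obtain ⟨z, hz, hst⟩ := h; exact .head hz (ih hst)

lemma dd_le {n : ℕ} (h : stepN G S n x y) : dd G S x y ≤ n := Nat.sInf_le h

lemma stepN_dd (h : reach G S x y) : stepN G S (dd G S x y) x y :=
  Nat.sInf_mem (exists_stepN_of_reach h)

lemma one_le_dd (h : reach G S x y) (hxy : x ≠ y) : 1 ≤ dd G S x y := by
  by_contra hlt
  push_neg at hlt
  have h0 : dd G S x y = 0 := by omega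
  have h1 := stepN_dd h
  rw [h0] at h1
  exact hxy h1

lemma detour (G : SimpleGraph V) (S : Finset V) (v : V) :
    ∀ n x w, w ≠ v → stepN G S n x w →
      reach G (S.erase v) x w ∨ ∃ k < n, stepN G S k x v := by
  intro n
  induction n with
  | zero => intro x w _ h; exact Or.inl (h ▸ .refl)
  | succ n ih =>
    intro x w hwv h
    obtain ⟨z, hxz, hst⟩ := h
    by_cases hxv : x = v
    · exact Or.inr ⟨0, Nat.succ_pos _, hxv⟩
    by_cases hzv : z = v
    · refine Or.inr ⟨1, ?_, ⟨z, hxz, hzv⟩⟩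
      subst hzv
      cases n with
      | zero => exact absurd hst hwv.symm
      | succ n => omega
    · rcases ih z w hwv hst with h | ⟨k, hk, hkv⟩
      · exact Or.inl (.head ⟨hxz.1, mem_erase.2 ⟨hxv, hxz.2.1⟩, mem_erase.2 ⟨hzv, hxz.2.2⟩⟩ h)
      · exact Or.inr ⟨k+1, by omega, ⟨z, hxz, hkv⟩⟩

lemma conn_of_base (hb : b ∈ T) (h : ∀ w ∈ T, reach G T b w) : Conn G T :=
  ⟨⟨b, hb⟩, fun x hx y hy => (reach_symm (h x hx)).trans (h y hy)⟩

lemma conn_glue {A B : Finset V} (hA : Conn G A) (hB : Conn G B)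
    (hzA : z ∈ A) (hzB : z ∈ B) : Conn G (A ∪ B) := by
  refine conn_of_base (T := A ∪ B) (mem_union_left _ hzA) ?_
  intro x hx
  rcases mem_union.1 hx with h | h
  · exact reach_mono subset_union_left (hA.2 z hzA x h)
  · exact reach_mono subset_union_right (hB.2 z hzB x h)

lemma conn_avoid {C : Finset V} (hvS : v ∈ S) (hvC : v ∉ C)
    (hNb : ∀ a ∈ C, ∀ x ∈ S, G.Adj a x → x ∈ C ∨ x = v)
    (hconn : Conn G S) (hne : (S \ C).Nonempty) : Conn G (S \ C) := by
  have key : ∀ n x y, y ∉ C → stepN G S n x y →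
      (x ∉ C → reach G (S \ C) x y) ∧ (x ∈ C → ∃ k < n, stepN G S k v y) := by
    intro n
    induction n using Nat.strong_induction_on with
    | _ n IHn =>
      intro x y hyC hst
      match n, hst with
      | 0, hst =>
        subst hst
        exact ⟨fun _ => .refl, fun hx => absurd hx hyC⟩
      | (n+1), ⟨z, hRz, hz⟩ =>
        constructor
        · intro hxC
          by_cases hzC : z ∈ C
          · have hx_eq : x = v :=
              (hNb z hzC x hRz.2.1 hRz.1.symm).resolve_left hxC
            obtain ⟨k, hk, hkst⟩ := ((IHn n (by omega)) z y hyC hz).2 hzC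
            have h2 := ((IHn k (by omega)) v y hyC hkst).1 hvC
            rw [hx_eq]; exact h2
          · have hR' : RR G (S \ C) x z :=
              ⟨hRz.1, mem_sdiff.2 ⟨hRz.2.1, hxC⟩, mem_sdiff.2 ⟨hRz.2.2, hzC⟩⟩
            exact .head hR' (((IHn n (by omega)) z y hyC hz).1 hzC)
        · intro hxC
          by_cases hzC : z ∈ C
          · obtain ⟨k, hk, h⟩ := ((IHn n (by omega)) z y hyC hz).2 hzC
            exact ⟨k, by omega, h⟩
          · have hz_eq : z = v := (hNb x hxC z hRz.2.2 hRz.1).resolve_left hzC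
            exact ⟨n, by omega, hz_eq ▸ hz⟩
  refine ⟨hne, fun x hx y hy => ?_⟩
  obtain ⟨n, hn⟩ := exists_stepN_of_reach
    (hconn.2 x (mem_sdiff.1 hx).1 y (mem_sdiff.1 hy).1)
  exact (key n x y (mem_sdiff.1 hy).2 hn).1 (mem_sdiff.1 hx).2

lemma exit_edge {C : Finset V} (hvT : v ∈ T)
    (hclosure : ∀ x ∈ C, ∀ z ∈ T.erase v, G.Adj x z → z ∈ C) :
    ∀ n x y, x ∈ C → y ∉ C → C ⊆ T.erase v → stepN G T n x y → ∃ a ∈ C, G.Adj a v := by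
  intro n
  induction n with
  | zero =>
    intro x y hx hy _ h
    exact absurd (h ▸ hx) hy
  | succ n ih =>
    intro x y hx hy hCT ⟨z, hRz, hz⟩
    by_cases hzC : z ∈ C
    · exact ih z y hzC hy hCT hz
    · by_cases hzv : z = v
      · exact ⟨x, hx, hzv ▸ hRz.1⟩
      · exact absurd (hclosure x hx z (mem_erase.2 ⟨hzv, hRz.2.2⟩) hRz.1) hzC

lemma reach_comp {C T' : Finset V} {w₀ : V} (hw₀ : w₀ ∈ C)
    (hclosure : ∀ x ∈ C, ∀ z ∈ T', G.Adj x z → z ∈ C)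
    (h : reach G T' w₀ x) : reach G C w₀ x ∧ x ∈ C := by
  induction h with
  | refl => exact ⟨.refl, hw₀⟩
  | tail h1 h2 ih =>
    have hz : _ ∈ C := hclosure _ ih.2 _ h2.2.2 h2.1
    exact ⟨.tail ih.1 ⟨h2.1, ih.2, hz⟩, hz⟩

theorem lemL (G : SimpleGraph V) :
    ∀ S : Finset V, Conn G S → 2 ≤ S.card → ∀ b ∈ S,
      (∃ w ∈ S, w ≠ b ∧ Conn G (S.erase w) ∧ Odd (deg G S w)) ∨
      (∃ u ∈ S, ∃ v ∈ S, u ≠ b ∧ v ≠ b ∧ G.Adj u v ∧ Conn G ((S.erase u).erase v)) := by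
  intro S
  induction S using Finset.strongInductionOn with
  | _ S IH =>
  intro hS h2 b hb
  -- farthest vertex u from b
  obtain ⟨u, huS, humax⟩ := S.exists_max_image (dd G S b) hS.1
  have hub : u ≠ b := by
    obtain ⟨y, hyS, hyb⟩ := Finset.exists_mem_ne (s := S) (by omega) b
    have h1 : 1 ≤ dd G S b y := one_le_dd (hS.2 b hb y hyS) (Ne.symm hyb)
    have h2' := humax y hyS
    intro h
    rw [h] at h2'
    have : dd G S b b ≤ 0 := dd_le (show stepN G S 0 b b from rfl)
    omega
  have hbu : b ∈ S.erase u := mem_erase.2 ⟨Ne.symm hub, hb⟩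
  have hreachTu : ∀ w ∈ S.erase u, reach G (S.erase u) b w := by
    intro w hw
    obtain ⟨hwu, hwS⟩ := mem_erase.1 hw
    rcases detour G S u _ _ _ hwu (stepN_dd (hS.2 b hb w hwS)) with h | ⟨k, hk, hkv⟩
    · exact h
    · have h1 : dd G S b u ≤ k := dd_le hkv
      have h2' := humax w hwS
      omega
  have hTconn : Conn G (S.erase u) := conn_of_base hbu hreachTu
  rcases Nat.even_or_odd (deg G S u) with heven | hodd
  swap
  · exact Or.inl ⟨u, huS, hub, hTconn, hodd⟩
  -- even-degree case
  set T := S.erase u with hT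
  set N := T.filter (G.Adj u) with hN
  have hNdeg : N.card = deg G S u := rfl
  have hNne : N.Nonempty := by
    have hr := hS.2 u huS b hb
    rcases Relation.ReflTransGen.cases_head hr with h | ⟨z, hRz, _⟩
    · exact absurd h hub
    · exact ⟨z, mem_filter.2 ⟨mem_erase.2 ⟨(G.ne_of_adj hRz.1).symm, hRz.2.2⟩, hRz.1⟩⟩
  have hN2 : 2 ≤ N.card := by
    have h1 : 1 ≤ N.card := card_pos.2 hNne
    rcases heven with ⟨k, hk⟩
    omega
  obtain ⟨v, hvN, hvmax⟩ := N.exists_max_image (dd G T b) hNne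
  have hvT : v ∈ T := (mem_filter.1 hvN).1
  have hvS : v ∈ S := (erase_subset _ _) hvT
  have hAdjuv : G.Adj u v := (mem_filter.1 hvN).2
  have hvb : v ≠ b := by
    obtain ⟨w, hwN, hwb⟩ := Finset.exists_mem_ne (s := N) (by omega) b
    have hwT : w ∈ T := (mem_filter.1 hwN).1
    have h1 : 1 ≤ dd G T b w := one_le_dd (hTconn.2 b hbu w hwT) (Ne.symm hwb)
    have h2' := hvmax w hwN
    intro h
    rw [h] at h2'
    have : dd G T b b ≤ 0 := dd_le (show stepN G T 0 b b from rfl)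
    omega
  by_cases hC : Conn G (T.erase v)
  · exact Or.inr ⟨u, huS, v, hvS, hub, hvb, hAdjuv, hC⟩
  -- non-connected remainder: find bad component C
  have hbT' : b ∈ T.erase v := mem_erase.2 ⟨Ne.symm hvb, hbu⟩
  obtain ⟨w₀, hw₀T', hnr⟩ : ∃ w₀ ∈ T.erase v, ¬ reach G (T.erase v) b w₀ := by
    by_contra h
    push_neg at h
    exact hC (conn_of_base hbT' h)
  set T' := T.erase v with hT'
  set C := T'.filter (reach G T' w₀) with hCdef
  have hw₀C : w₀ ∈ C := mem_filter.2 ⟨hw₀T', .refl⟩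
  have hbC : b ∉ C := fun h => hnr (reach_symm (mem_filter.1 h).2)
  have hCsubT' : C ⊆ T' := filter_subset _ _
  have hCsubS : C ⊆ S := hCsubT'.trans ((erase_subset _ _).trans (erase_subset _ _))
  have hvC : v ∉ C := fun h => (mem_erase.1 (hCsubT' h)).1 rfl
  have huC : u ∉ C := fun h => (mem_erase.1 ((erase_subset _ _) (hCsubT' h))).1 rfl
  have hclosure : ∀ x ∈ C, ∀ z ∈ T', G.Adj x z → z ∈ C := by
    intro x hx z hz hadj
    exact mem_filter.2 ⟨hz, .tail (mem_filter.1 hx).2 ⟨hadj, hCsubT' hx, hz⟩⟩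
  have hCnoU : ∀ w ∈ C, ¬ G.Adj u w := by
    intro w hwC hadj
    have hwT' : w ∈ T' := hCsubT' hwC
    have hwT : w ∈ T := (erase_subset _ _) hwT'
    have hwN : w ∈ N := mem_filter.2 ⟨hwT, hadj⟩
    have h1 : ¬ reach G T' b w := fun hr =>
      hnr (hr.trans (reach_symm (mem_filter.1 hwC).2))
    have hwv : w ≠ v := (mem_erase.1 hwT').1
    rcases detour G T v _ _ _ hwv (stepN_dd (hTconn.2 b hbu w hwT)) with h | ⟨k, hk, hkv⟩
    · exact h1 h
    · have h3 : dd G T b v ≤ k := dd_le hkv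
      have h4 := hvmax w hwN
      omega
  have hNb : ∀ a ∈ C, ∀ x ∈ S, G.Adj a x → x ∈ C ∨ x = v := by
    intro a haC x hxS hadj
    by_cases hxv : x = v
    · exact Or.inr hxv
    by_cases hxu : x = u
    · exact absurd (hxu ▸ hadj.symm) (hCnoU a haC)
    · exact Or.inl (hclosure a haC x
        (mem_erase.2 ⟨hxv, mem_erase.2 ⟨hxu, hxS⟩⟩) hadj)
  -- an edge from C to v
  obtain ⟨c₀, hc₀C, hc₀v⟩ : ∃ a ∈ C, G.Adj a v := by
    obtain ⟨n, hn⟩ := exists_stepN_of_reach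
      (hTconn.2 w₀ ((erase_subset _ _) hw₀T') b hbu)
    exact exit_edge hvT hclosure n w₀ b hw₀C hbC hCsubT' hn
  set H := insert v C with hH
  have hHsubS : H ⊆ S := by
    intro t ht
    rcases mem_insert.1 ht with rfl | ht
    · exact hvS
    · exact hCsubS ht
  have hHss : H ⊂ S := by
    refine Finset.ssubset_iff_of_subset hHsubS |>.2 ⟨u, huS, ?_⟩
    intro hu
    rcases mem_insert.1 hu with h | h
    · exact (G.ne_of_adj hAdjuv) h
    · exact huC h
  have hvH : v ∈ H := mem_insert_self _ _
  have hCreach : ∀ x ∈ C, reach G C w₀ x := by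
    intro x hx
    exact (reach_comp hw₀C hclosure (mem_filter.1 hx).2).1
  have hHbase : ∀ x ∈ H, reach G H v x := by
    intro x hx
    rcases mem_insert.1 hx with rfl | hxC
    · exact .refl
    · have h1 : reach G H c₀ x := reach_mono (subset_insert _ _)
        ((reach_symm (hCreach c₀ hc₀C)).trans (hCreach x hxC))
      exact .head ⟨hc₀v.symm, hvH, mem_insert_of_mem hc₀C⟩ h1
  have hHconn : Conn G H := conn_of_base hvH hHbase
  have hH2 : 2 ≤ H.card := by
    have hw₀v : w₀ ≠ v := (mem_erase.1 hw₀T').1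
    refine Finset.one_lt_card.2 ⟨v, hvH, w₀, mem_insert_of_mem hw₀C, Ne.symm hw₀v⟩
  have hSCconn : Conn G (S \ C) := by
    refine conn_avoid hvS hvC hNb hS ⟨b, mem_sdiff.2 ⟨hb, hbC⟩⟩
  have hvSC : v ∈ S \ C := mem_sdiff.2 ⟨hvS, hvC⟩
  rcases IH H hHss hHconn hH2 v hvH with
    ⟨w, hwH, hwv, hconnHw, hoddH⟩ | ⟨u', hu'H, v', hv'H, hu'v, hv'v, hadj', hconnH'⟩
  · -- lift the left disjunct
    have hwC : w ∈ C := (mem_insert.1 hwH).resolve_left hwv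
    have hwS : w ∈ S := hCsubS hwC
    have hwb : w ≠ b := fun h => hbC (h ▸ hwC)
    refine Or.inl ⟨w, hwS, hwb, ?_, ?_⟩
    · have hglue := conn_glue hconnHw hSCconn
        (mem_erase.2 ⟨Ne.symm hwv, hvH⟩) hvSC
      have hunion : (H.erase w) ∪ (S \ C) = S.erase w := by
        ext t
        simp only [mem_union, mem_erase, mem_sdiff, hH, mem_insert]
        constructor
        · rintro (⟨htw, (rfl | htC)⟩ | ⟨htS, htC⟩)
          · exact ⟨htw, hvS⟩
          · exact ⟨htw, hCsubS htC⟩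
          · exact ⟨fun h => htC (h ▸ hwC), htS⟩
        · rintro ⟨htw, htS⟩
          by_cases htC : t ∈ C
          · exact Or.inl ⟨htw, Or.inr htC⟩
          · exact Or.inr ⟨htS, htC⟩
      rwa [hunion] at hglue
    · have hdeg : deg G S w = deg G H w := by
        unfold deg
        congr 1
        ext x
        simp only [mem_filter, mem_erase]
        constructor
        · rintro ⟨⟨hxw, hxS⟩, hadj⟩
          rcases hNb w hwC x hxS hadj with h | rfl
          · exact ⟨⟨hxw, mem_insert_of_mem h⟩, hadj⟩
          · exact ⟨⟨hxw, hvH⟩, hadj⟩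
        · rintro ⟨⟨hxw, hxH⟩, hadj⟩
          exact ⟨⟨hxw, hHsubS hxH⟩, hadj⟩
      rwa [hdeg]
  · -- lift the right disjunct
    have hu'C : u' ∈ C := (mem_insert.1 hu'H).resolve_left hu'v
    have hv'C : v' ∈ C := (mem_insert.1 hv'H).resolve_left hv'v
    have hu'b : u' ≠ b := fun h => hbC (h ▸ hu'C)
    have hv'b : v' ≠ b := fun h => hbC (h ▸ hv'C)
    refine Or.inr ⟨u', hCsubS hu'C, v', hCsubS hv'C, hu'b, hv'b, hadj', ?_⟩
    have hglue := conn_glue hconnH' hSCconn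
      (mem_erase.2 ⟨Ne.symm hv'v, mem_erase.2 ⟨Ne.symm hu'v, hvH⟩⟩) hvSC
    have hunion : ((H.erase u').erase v') ∪ (S \ C) = (S.erase u').erase v' := by
      ext t
      simp only [mem_union, mem_erase, mem_sdiff, hH, mem_insert]
      constructor
      · rintro (⟨htv', htu', (rfl | htC)⟩ | ⟨htS, htC⟩)
        · exact ⟨htv', htu', hvS⟩
        · exact ⟨htv', htu', hCsubS htC⟩
        · exact ⟨fun h => htC (h ▸ hv'C), fun h => htC (h ▸ hu'C), htS⟩
      · rintro ⟨htv', htu', htS⟩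
        by_cases htC : t ∈ C
        · exact Or.inl ⟨htv', htu', Or.inr htC⟩
        · exact Or.inr ⟨htS, htC⟩
    rwa [hunion] at hglue

noncomputable def ES (G : SimpleGraph V) (S : Finset V) : Finset (Sym2 V) :=
  G.edgeFinset.filter (fun e => ∀ x ∈ e, x ∈ S)

def satP (σ : Sym2 V → Bool) (c : V → ℤ) (e : Sym2 V) : Prop :=
  ∀ u v : V, e = s(u,v) → ((c u = c v) ↔ σ e = true)

noncomputable def satE (σ : Sym2 V → Bool) (c : V → ℤ) (F : Finset (Sym2 V)) : ℕ :=
  (F.filter (satP σ c)).card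

noncomputable def crossW (G : SimpleGraph V) (S : Finset V) (w : V) : Finset (Sym2 V) :=
  ((S.erase w).filter (G.Adj w)).image (fun x => s(w,x))

variable {σ : Sym2 V → Bool} {c c' : V → ℤ}

lemma mem_ES {a b : V} : s(a,b) ∈ ES G S ↔ G.Adj a b ∧ a ∈ S ∧ b ∈ S := by
  simp only [ES, mem_filter, SimpleGraph.mem_edgeFinset, SimpleGraph.mem_edgeSet,
    Sym2.forall_mem_pair]

lemma mem_ES_mem {e : Sym2 V} (he : e ∈ ES G S) : ∀ x ∈ e, x ∈ S :=
  (mem_filter.1 he).2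

lemma sym2_mk_inj (w : V) : Function.Injective (fun x => s(w,x)) := by
  intro x y h
  simp only [Sym2.eq_iff] at h
  rcases h with ⟨_, h⟩ | ⟨h1, h2⟩
  · exact h
  · exact h2.trans h1

lemma card_crossW : (crossW G S w).card = deg G S w :=
  Finset.card_image_of_injective _ (sym2_mk_inj w)

lemma mem_crossW {e : Sym2 V} :
    e ∈ crossW G S w ↔ ∃ x, x ∈ S.erase w ∧ G.Adj w x ∧ e = s(w,x) := by
  simp only [crossW, mem_image, mem_filter]
  constructor
  · rintro ⟨x, ⟨h1, h2⟩, rfl⟩; exact ⟨x, h1, h2, rfl⟩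
  · rintro ⟨x, h1, h2, rfl⟩; exact ⟨x, ⟨h1, h2⟩, rfl⟩

lemma ES_erase (hw : w ∈ S) :
    ES G S = ES G (S.erase w) ∪ crossW G S w := by
  ext e
  refine Sym2.inductionOn e (fun a b => ?_)
  simp only [mem_union, mem_ES, mem_crossW, mem_erase]
  constructor
  · rintro ⟨hab, haS, hbS⟩
    by_cases haw : a = w
    · subst haw
      exact Or.inr ⟨b, ⟨(G.ne_of_adj hab).symm, hbS⟩, hab, rfl⟩
    · by_cases hbw : b = w
      · subst hbw
        exact Or.inr ⟨a, ⟨haw, haS⟩, hab.symm, Sym2.eq_swap⟩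
      · exact Or.inl ⟨hab, ⟨haw, haS⟩, ⟨hbw, hbS⟩⟩
  · rintro (⟨hab, ⟨_, haS⟩, _, hbS⟩ | ⟨x, ⟨hxw, hxS⟩, hadj, he⟩)
    · exact ⟨hab, haS, hbS⟩
    · rw [Sym2.eq_iff] at he
      rcases he with ⟨rfl, rfl⟩ | ⟨rfl, rfl⟩
      · exact ⟨hadj, hw, hxS⟩
      · exact ⟨hadj.symm, hxS, hw⟩

lemma ES_erase_disj : Disjoint (ES G (S.erase w)) (crossW G S w) := by
  rw [Finset.disjoint_left]
  intro e he1 he2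
  obtain ⟨x, _, _, rfl⟩ := mem_crossW.1 he2
  have := mem_ES_mem he1 w (Sym2.mem_mk_left _ _)
  exact (mem_erase.1 this).1 rfl

lemma satP_pair {a b : V} :
    satP σ c s(a,b) ↔ ((c a = c b) ↔ σ s(a,b) = true) := by
  constructor
  · exact fun h => h a b rfl
  · intro h x y hxy
    rw [Sym2.eq_iff] at hxy
    rcases hxy with ⟨rfl, rfl⟩ | ⟨rfl, rfl⟩
    · exact h
    · rw [eq_comm]; exact h

lemma satP_congr {e : Sym2 V} (ε : ℤ) (hε : ε ≠ 0)
    (h : ∀ x ∈ e, c x = ε * c' x) : satP σ c e ↔ satP σ c' e := by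
  refine Sym2.inductionOn e (fun a b h => ?_) h
  rw [satP_pair, satP_pair,
    h a (Sym2.mem_mk_left _ _), h b (Sym2.mem_mk_right _ _),
    mul_right_inj' hε]

lemma satE_union {F1 F2 : Finset (Sym2 V)} (h : Disjoint F1 F2) :
    satE σ c (F1 ∪ F2) = satE σ c F1 + satE σ c F2 := by
  unfold satE
  rw [filter_union, card_union_of_disjoint (disjoint_filter_filter h)]

lemma satE_congr {F : Finset (Sym2 V)} (h : ∀ e ∈ F, satP σ c e ↔ satP σ c' e) :
    satE σ c F = satE σ c' F := by
  unfold satE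
  rw [filter_congr h]

lemma filter_split_card {α : Type*} (B : Finset α) (p q : α → Prop)
    (h : ∀ x ∈ B, p x ↔ ¬ q x) :
    (B.filter p).card + (B.filter q).card = B.card := by
  have h1 : B.filter p = B.filter (fun x => ¬ q x) := filter_congr h
  rw [h1]
  rw [add_comm]
  exact Finset.card_filter_add_card_filter_not (p := q)

lemma iff_toggle {x y : ℤ} (hx : x = 1 ∨ x = -1) (hy : y = 1 ∨ y = -1) (P : Prop) :
    ((x = y) ↔ P) ↔ ¬((x = -y) ↔ P) := by
  by_cases hP : P <;>
    rcases hx with rfl | rfl <;> rcases hy with rfl | rfl <;> simp [hP]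

lemma iff_toggle2 {t : ℤ} (ht : t = 1 ∨ t = -1) (P : Prop) :
    (((1:ℤ) = t) ↔ P) ↔ ¬(((-1:ℤ) = t) ↔ P) := by
  by_cases hP : P <;> rcases ht with rfl | rfl <;> simp [hP]

theorem main (G : SimpleGraph V) (σ : Sym2 V → Bool) :
    ∀ S : Finset V, Conn G S → ∃ c : V → ℤ, (∀ v, c v = 1 ∨ c v = -1) ∧
      2 * (ES G S).card + S.card ≤ 4 * satE σ c (ES G S) + 1 := by
  intro S
  induction S using Finset.strongInductionOn with
  | _ S IH =>
  intro hS
  by_cases h2 : 2 ≤ S.card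
  swap
  · -- singleton case
    have h1 : S.card = 1 := by have := card_pos.2 hS.1; omega
    have hES : ES G S = ∅ := by
      rw [eq_empty_iff_forall_notMem]
      intro e
      refine Sym2.inductionOn e (fun a b => ?_)
      intro hab
      obtain ⟨hadj, haS, hbS⟩ := mem_ES.1 hab
      obtain ⟨x, hx⟩ := card_eq_one.1 h1
      rw [hx, mem_singleton] at haS hbS
      exact G.ne_of_adj hadj (haS.trans hbS.symm)
    refine ⟨fun _ => 1, fun _ => Or.inl rfl, ?_⟩
    rw [hES, h1]
    simp [satE]
  obtain ⟨b, hb⟩ := hS.1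
  rcases lemL G S hS h2 b hb with
    ⟨w, hwS, _, hconn', hodd⟩ | ⟨u, huS, v, hvS, _, _, hadj, hconn''⟩
  · -- remove a single odd-degree vertex w
    set S' := S.erase w with hS'def
    obtain ⟨c', hvals', hineq'⟩ := IH S' (erase_ssubset hwS) hconn'
    have hdec : ES G S = ES G S' ∪ crossW G S w := ES_erase hwS
    have hdisj : Disjoint (ES G S') (crossW G S w) := ES_erase_disj
    have hm : (ES G S).card = (ES G S').card + (crossW G S w).card := by
      rw [hdec, card_union_of_disjoint hdisj]
    have hcardS : S.card = S'.card + 1 := by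
      have h3 : S'.card = S.card - 1 := by rw [hS'def]; exact card_erase_of_mem hwS
      have h4 := card_pos.2 hS.1
      omega
    set cp : V → ℤ := fun x => if x = w then 1 else c' x with hcp
    set cm : V → ℤ := fun x => if x = w then -1 else c' x with hcm
    have hvalsp : ∀ x, cp x = 1 ∨ cp x = -1 := fun x => by
      by_cases h : x = w <;> simp [hcp, h, hvals' x]
    have hvalsm : ∀ x, cm x = 1 ∨ cm x = -1 := fun x => by
      by_cases h : x = w <;> simp [hcm, h, hvals' x]
    have hagree : ∀ cc : V → ℤ, (∀ x, x ≠ w → cc x = c' x) →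
        satE σ cc (ES G S') = satE σ c' (ES G S') := by
      intro cc hcc
      refine satE_congr (fun e he => ?_)
      refine satP_congr 1 one_ne_zero (fun x hx => ?_)
      rw [one_mul]
      refine hcc x (fun h => ?_)
      have hxS' := mem_ES_mem he x hx
      rw [h] at hxS'
      exact (mem_erase.1 hxS').1 rfl
    have htog : ∀ e ∈ crossW G S w, satP σ cp e ↔ ¬ satP σ cm e := by
      intro e he
      obtain ⟨x, hx, hadjx, rfl⟩ := mem_crossW.1 he
      have hxw : x ≠ w := (mem_erase.1 hx).1
      rw [satP_pair, satP_pair]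
      simp only [hcp, hcm, if_pos rfl, if_neg hxw]
      exact iff_toggle2 (hvals' x) _
    have hsplit : satE σ cp (crossW G S w) + satE σ cm (crossW G S w)
        = (crossW G S w).card := filter_split_card _ _ _ htog
    have hoddd : Odd (crossW G S w).card := by rw [card_crossW]; exact hodd
    obtain ⟨r, hr⟩ := hoddd
    by_cases hchoose : (crossW G S w).card + 1 ≤ 2 * satE σ cp (crossW G S w)
    · refine ⟨cp, hvalsp, ?_⟩
      have e1 : satE σ cp (ES G S)
          = satE σ cp (ES G S') + satE σ cp (crossW G S w) := by
        rw [hdec, satE_union hdisj]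
      rw [e1, hagree cp (fun x hx => if_neg hx)]
      omega
    · refine ⟨cm, hvalsm, ?_⟩
      have e1 : satE σ cm (ES G S)
          = satE σ cm (ES G S') + satE σ cm (crossW G S w) := by
        rw [hdec, satE_union hdisj]
      rw [e1, hagree cm (fun x hx => if_neg hx)]
      omega
  · -- remove an adjacent pair u, v
    have huv : u ≠ v := G.ne_of_adj hadj
    set T := S.erase u with hTdef
    set S'' := T.erase v with hSdef
    have hvT : v ∈ T := mem_erase.2 ⟨Ne.symm huv, hvS⟩
    obtain ⟨c', hvals', hineq'⟩ := IH S''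
      (Finset.ssubset_of_subset_of_ssubset (erase_subset _ _) (erase_ssubset huS)) hconn''
    set cU : Finset (Sym2 V) := (S''.filter (G.Adj u)).image (fun x => s(u,x)) with hcU
    have hd1 : ES G S = ES G T ∪ crossW G S u := ES_erase huS
    have hj1 : Disjoint (ES G T) (crossW G S u) := ES_erase_disj
    have hd2 : ES G T = ES G S'' ∪ crossW G T v := ES_erase hvT
    have hj2 : Disjoint (ES G S'') (crossW G T v) := ES_erase_disj
    have hsplitU : crossW G S u = insert s(u,v) cU := by
      unfold crossW
      have hset : (S.erase u).filter (G.Adj u) = insert v (S''.filter (G.Adj u)) := by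
        ext x
        simp only [mem_filter, mem_erase, mem_insert, hSdef, hTdef]
        constructor
        · rintro ⟨⟨hxu, hxS⟩, hadjx⟩
          by_cases hxv : x = v
          · exact Or.inl hxv
          · exact Or.inr ⟨⟨hxv, hxu, hxS⟩, hadjx⟩
        · rintro (rfl | ⟨⟨hxv, hxu, hxS⟩, hadjx⟩)
          · exact ⟨⟨Ne.symm huv, hvS⟩, hadj⟩
          · exact ⟨⟨hxu, hxS⟩, hadjx⟩
      rw [hset, image_insert]
    have huvC : s(u,v) ∉ cU := by
      intro h
      obtain ⟨x, hx, he⟩ := mem_image.1 h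
      rw [Sym2.eq_iff] at he
      rcases he with ⟨_, rfl⟩ | ⟨h1, _⟩
      · exact (mem_erase.1 (mem_filter.1 hx).1).1 rfl
      · exact huv h1
    have hjB : Disjoint (crossW G T v) cU := by
      rw [Finset.disjoint_left]
      intro e h1 h2
      obtain ⟨x, hx, hadjx, rfl⟩ := mem_crossW.1 h1
      obtain ⟨y, _, hey⟩ := mem_image.1 h2
      rw [Sym2.eq_iff] at hey
      rcases hey with ⟨h3, _⟩ | ⟨h4, _⟩
      · exact huv h3
      · have hxT : x ∈ T := (mem_erase.1 hx).2
        exact (mem_erase.1 hxT).1 h4.symm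
    have hmS : (ES G S).card
        = (ES G S'').card + ((crossW G T v).card + cU.card) + 1 := by
      rw [hd1, card_union_of_disjoint hj1, hd2, card_union_of_disjoint hj2,
        hsplitU, card_insert_of_notMem huvC]
      omega
    have hcardS : S.card = S''.card + 2 := by
      have h3 : T.card = S.card - 1 := by rw [hTdef]; exact card_erase_of_mem huS
      have h4 : S''.card = T.card - 1 := by rw [hSdef]; exact card_erase_of_mem hvT
      have h5 : 0 < T.card := card_pos.2 ⟨v, hvT⟩
      have h6 := card_pos.2 hS.1
      omega
    set cv : ℤ := if σ s(u,v) = true then 1 else -1 with hcv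
    have hcvvals : cv = 1 ∨ cv = -1 := by
      rw [hcv]; by_cases h : σ s(u,v) = true <;> simp [h]
    set cp : V → ℤ := fun x => if x = u then 1 else if x = v then cv else c' x with hcp
    set cm : V → ℤ := fun x => if x = u then 1 else if x = v then cv else -(c' x) with hcm
    have hvalsp : ∀ x, cp x = 1 ∨ cp x = -1 := fun x => by
      by_cases h : x = u
      · simp [hcp, h]
      by_cases h' : x = v
      · subst h'
        simp only [hcp, if_neg h, if_pos rfl]
        exact hcvvals
      · simp [hcp, h, h', hvals' x]
    have hvalsm : ∀ x, cm x = 1 ∨ cm x = -1 := fun x => by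
      by_cases h : x = u
      · simp [hcm, h]
      by_cases h' : x = v
      · subst h'
        simp only [hcm, if_neg h, if_pos rfl]
        exact hcvvals
      · rcases hvals' x with hx | hx <;> simp [hcm, h, h', hx]
    have hmemS'' : ∀ x, x ∈ S'' → x ≠ u ∧ x ≠ v := by
      intro x hx
      exact ⟨(mem_erase.1 ((mem_erase.1 hx).2)).1, (mem_erase.1 hx).1⟩
    have hsatuv : ∀ cc : V → ℤ, cc u = 1 → cc v = cv → satP σ cc s(u,v) := by
      intro cc h1 h2
      rw [satP_pair, h1, h2, hcv]
      by_cases hσ : σ s(u,v) = true <;> simp [hσ]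
    have hcpu : cp u = 1 := by simp [hcp]
    have hcpv : cp v = cv := by simp [hcp, Ne.symm huv]
    have hcmu : cm u = 1 := by simp [hcm]
    have hcmv : cm v = cv := by simp [hcm, Ne.symm huv]
    have htog : ∀ e ∈ crossW G T v ∪ cU, satP σ cp e ↔ ¬ satP σ cm e := by
      intro e he
      rcases mem_union.1 he with h | h
      · obtain ⟨x, hx, hadjx, rfl⟩ := mem_crossW.1 h
        have hxv : x ≠ v := (mem_erase.1 hx).1
        have hxu : x ≠ u := (mem_erase.1 ((mem_erase.1 hx).2)).1
        rw [satP_pair, satP_pair]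
        simp only [hcp, hcm, if_neg hxu, if_neg hxv, if_neg (Ne.symm huv), if_pos rfl]
        exact iff_toggle hcvvals (hvals' x) _
      · obtain ⟨x, hxmem, hex⟩ := mem_image.1 h
        obtain ⟨hxS'', hadjx⟩ := mem_filter.1 hxmem
        obtain ⟨hxu, hxv⟩ := hmemS'' x hxS''
        subst hex
        rw [satP_pair, satP_pair]
        simp only [hcp, hcm, if_pos rfl, if_neg hxu, if_neg hxv]
        exact iff_toggle (Or.inl rfl) (hvals' x) _
    have hsplitB : satE σ cp (crossW G T v ∪ cU) + satE σ cm (crossW G T v ∪ cU)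
        = (crossW G T v ∪ cU).card := filter_split_card _ _ _ htog
    have hcardB : (crossW G T v ∪ cU).card = (crossW G T v).card + cU.card :=
      card_union_of_disjoint hjB
    have hagree : ∀ (cc : V → ℤ) (ε : ℤ), ε ≠ 0 → (∀ x, x ≠ u → x ≠ v → cc x = ε * c' x) →
        satE σ cc (ES G S'') = satE σ c' (ES G S'') := by
      intro cc ε hε hcc
      refine satE_congr (fun e he => ?_)
      refine satP_congr ε hε (fun x hx => ?_)
      have hxS'' := mem_ES_mem he x hx
      obtain ⟨hxu, hxv⟩ := hmemS'' x hxS''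
      exact hcc x hxu hxv
    have hdecompose : ∀ cc : V → ℤ, satP σ cc s(u,v) →
        satE σ cc (ES G S) = satE σ cc (ES G S'')
          + satE σ cc (crossW G T v ∪ cU) + 1 := by
      intro cc hsat
      have h3 : satE σ cc (insert s(u,v) cU) = satE σ cc cU + 1 := by
        unfold satE
        rw [filter_insert, if_pos hsat,
          card_insert_of_notMem (fun h => huvC (filter_subset _ _ h))]
      rw [hd1, satE_union hj1, hd2, satE_union hj2, hsplitU, h3,
        satE_union hjB]
      omega
    by_cases hchoose : (crossW G T v ∪ cU).card ≤ 2 * satE σ cp (crossW G T v ∪ cU)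
    · refine ⟨cp, hvalsp, ?_⟩
      rw [hdecompose cp (hsatuv cp hcpu hcpv),
        hagree cp 1 one_ne_zero (fun x hxu hxv => by simp [hcp, hxu, hxv])]
      omega
    · refine ⟨cm, hvalsm, ?_⟩
      rw [hdecompose cm (hsatuv cm hcmu hcmv),
        hagree cm (-1) (by norm_num) (fun x hxu hxv => by simp [hcm, hxu, hxv])]
      omega

lemma reach_of_walk {x y : V} (w : G.Walk x y) : reach G (univ : Finset V) x y := by
  induction w with
  | nil => exact .refl
  | cons h _ ih => exact .head ⟨h, mem_univ _, mem_univ _⟩ ih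

lemma conn_univ (G : SimpleGraph V) (hG : G.Connected) : Conn G (univ : Finset V) := by
  have : Nonempty V := hG.nonempty
  refine ⟨univ_nonempty, fun x _ y _ => ?_⟩
  exact (hG.preconnected x y).elim (fun w => reach_of_walk w)

end EE13

/-- Balanced subgraph generalization of the Edwards–Erdős bound: for any labeling of
the edges of a connected graph by `=`/`≠` (here `true`/`false`), some 2-coloring
satisfies at least `m/2 + (n-1)/4` edges. -/
theorem stmt13 {V : Type*} [Fintype V] (G : SimpleGraph V) (hG : G.Connected)
    (σ : Sym2 V → Bool) :
    ∃ c : V → ℤ, (∀ v, c v = 1 ∨ c v = -1) ∧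
      (G.edgeFinset.card : ℝ) / 2 + ((Fintype.card V : ℝ) - 1) / 4
        ≤ ((G.edgeFinset.filter fun e =>
              ∀ u v : V, e = s(u, v) → ((c u = c v) ↔ σ e = true)).card : ℝ) := by
  obtain ⟨c, hvals, hineq⟩ := EE13.main G σ Finset.univ (EE13.conn_univ G hG)
  refine ⟨c, hvals, ?_⟩
  have hES : EE13.ES G Finset.univ = G.edgeFinset := by
    unfold EE13.ES
    exact Finset.filter_true_of_mem (fun e _ => fun x _ => Finset.mem_univ x)
  rw [hES] at hineq
  have hsat : EE13.satE σ c G.edgeFinset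
      = (G.edgeFinset.filter fun e =>
          ∀ u v : V, e = s(u, v) → ((c u = c v) ↔ σ e = true)).card := by
    unfold EE13.satE EE13.satP
    exact congrArg Finset.card (Finset.filter_congr_decidable _ _ _)
  rw [hsat] at hineq
  have hcard : Fintype.card V = (Finset.univ : Finset V).card := rfl
  rw [hcard]
  have hR : ((2 * G.edgeFinset.card + (Finset.univ : Finset V).card : ℕ) : ℝ)
      ≤ ((4 * (G.edgeFinset.filter fun e =>
          ∀ u v : V, e = s(u, v) → ((c u = c v) ↔ σ e = true)).card + 1 : ℕ) : ℝ) := by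
    exact_mod_cast hineq
  push_cast at hR
  linarith
end

section
/- Let S be a system of equations ∏_{i∈I_j} x_i = b_j over x ∈ {-1,1}^n with weights w_j, let A be the m×n matrix over 𝔽₂ with a_{ji} = 1 iff i ∈ I_j, let t = rank A, and suppose columns i_1,...,i_t of A are linearly independent. Let S' be the system obtained by deleting all variables not in {x_{i_1},...,x_{i_t}} from the equations of S (i.e., replacing each I_j by I_j ∩ {i_1,...,i_t}). Then the maximum excess of S' equals the maximum excess of S. -/
open scoped Classical BigOperators

noncomputable def chi (a : ZMod 2) : ℝ := if a = 1 then -1 else 1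

lemma chi_add (a b : ZMod 2) : chi (a + b) = chi a * chi b := by
  have key : ∀ a b : ZMod 2, (a + b = 1 ↔ ¬(a = 1 ↔ b = 1)) := by decide
  by_cases ha : a = 1 <;> by_cases hb : b = 1 <;> simp [chi, ha, hb, key]

lemma chi_one_or (a : ZMod 2) : chi a = 1 ∨ chi a = -1 := by
  unfold chi; split <;> simp

lemma chi_sum {α : Type*} (s : Finset α) (f : α → ZMod 2) :
    ∏ i ∈ s, chi (f i) = chi (∑ i ∈ s, f i) := by
  classical
  induction s using Finset.induction_on with
  | empty => norm_num [chi]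
  | insert _ _ h ih => rw [Finset.prod_insert h, Finset.sum_insert h, chi_add, ih]

/-- Correctness of Reduction Rule 2: deleting all variables outside a maximal set of
linearly independent columns does not change the maximum excess. -/
theorem stmt17 (n m t : ℕ) (I : Fin m → Finset (Fin n)) (b w : Fin m → ℝ)
    (hb : ∀ j, b j = 1 ∨ b j = -1) (hw : ∀ j, 0 < w j)
    (c : Fin t → Fin n) (hc : Function.Injective c)
    (hli : LinearIndependent (ZMod 2)
      (fun l : Fin t => fun j : Fin m => if c l ∈ I j then (1 : ZMod 2) else 0))
    (hrank : (Matrix.of fun (j : Fin m) (i : Fin n) =>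
        if i ∈ I j then (1 : ZMod 2) else 0).rank = t) :
    sSup {y : ℝ | ∃ x : Fin n → ℝ, (∀ i, x i = 1 ∨ x i = -1) ∧
        y = ∑ j, w j * b j * ∏ i ∈ I j ∩ Finset.image c Finset.univ, x i}
      = sSup {y : ℝ | ∃ x : Fin n → ℝ, (∀ i, x i = 1 ∨ x i = -1) ∧
        y = ∑ j, w j * b j * ∏ i ∈ I j, x i} := by
  classical
  set u : Fin n → (Fin m → ZMod 2) := fun i j => if i ∈ I j then 1 else 0 with hu
  set v : Fin t → (Fin m → ZMod 2) := fun l j => if c l ∈ I j then 1 else 0 with hv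
  have hspan : ∀ i, u i ∈ Submodule.span (ZMod 2) (Set.range v) := by
    intro i
    have h1 : Submodule.span (ZMod 2) (Set.range v)
        ≤ Submodule.span (ZMod 2) (Set.range u) := by
      apply Submodule.span_mono
      rintro _ ⟨l, rfl⟩; exact ⟨c l, rfl⟩
    have h2 : Module.finrank (ZMod 2)
        (Submodule.span (ZMod 2) (Set.range u)) = t := by
      have h := hrank
      rw [Matrix.rank, Matrix.range_mulVecLin] at h
      exact h
    have h3 : Module.finrank (ZMod 2)
        (Submodule.span (ZMod 2) (Set.range v)) = t := by
      simpa using finrank_span_eq_card hli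
    have heq : Submodule.span (ZMod 2) (Set.range v)
        = Submodule.span (ZMod 2) (Set.range u) :=
      Submodule.eq_of_le_of_finrank_le h1 (by rw [h2, h3])
    rw [heq]
    exact Submodule.subset_span ⟨i, rfl⟩
  have hg : ∀ i, ∃ g : Fin t → ZMod 2, ∑ l, g l • v l = u i := by
    intro i
    exact (Submodule.mem_span_range_iff_exists_fun _).mp (hspan i)
  choose g hgspec using hg
  congr 1
  ext y
  simp only [Set.mem_setOf_eq]
  constructor
  · rintro ⟨x, hx, rfl⟩
    refine ⟨fun i => if i ∈ Finset.image c Finset.univ then x i else 1, fun i => ?_, ?_⟩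
    · by_cases h : i ∈ Finset.image c Finset.univ
      · simpa [h] using hx i
      · simp [h]
    · refine Finset.sum_congr rfl fun j _ => ?_
      congr 1
      rw [← Finset.filter_mem_eq_inter, Finset.prod_filter]
  · rintro ⟨x, hx, rfl⟩
    set z : Fin n → ZMod 2 := fun i => if x i = 1 then 0 else 1 with hz
    have hxz : ∀ i, x i = chi (z i) := by
      intro i; rcases hx i with h | h <;> norm_num [hz, chi, h]
    set z2 : Fin t → ZMod 2 := fun l => ∑ i, z i * g i l with hz2
    set w2 : Fin n → ZMod 2 := fun i => ∑ l, if c l = i then z2 l else 0 with hw2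
    refine ⟨fun i => chi (w2 i), fun i => chi_one_or _, ?_⟩
    refine Finset.sum_congr rfl fun j _ => ?_
    congr 1
    rw [chi_sum,
      show (∏ i ∈ I j, x i) = ∏ i ∈ I j, chi (z i) from
        Finset.prod_congr rfl fun i _ => hxz i, chi_sum]
    congr 1
    have key : ∀ s : Finset (Fin n), ∑ i ∈ s, w2 i
        = ∑ l, if c l ∈ s then z2 l else 0 := by
      intro s
      calc ∑ i ∈ s, ∑ l, (if c l = i then z2 l else 0)
          = ∑ l, ∑ i ∈ s, (if c l = i then z2 l else 0) := Finset.sum_comm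
        _ = ∑ l, if c l ∈ s then z2 l else 0 := by
            refine Finset.sum_congr rfl fun l _ => ?_
            rw [Finset.sum_ite_eq]
    rw [key]
    have h1 : ∑ l, (if c l ∈ I j ∩ Finset.image c Finset.univ then z2 l else 0)
        = ∑ l, z2 l * v l j := by
      refine Finset.sum_congr rfl fun l _ => ?_
      have hmem : c l ∈ Finset.image c Finset.univ := Finset.mem_image_of_mem c (Finset.mem_univ l)
      by_cases h : c l ∈ I j <;> simp [hv, h, hmem]
    have h2 : ∑ i ∈ I j, z i = ∑ l, z2 l * v l j := by
      have e2 : ∀ i, u i j = ∑ l, g i l * v l j := by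
        intro i
        have h := congrFun (hgspec i) j
        simpa [Finset.sum_apply] using h.symm
      calc ∑ i ∈ I j, z i = ∑ i, z i * u i j := by
            simp [hu, mul_ite, Finset.sum_ite_mem]
        _ = ∑ i, ∑ l, z i * g i l * v l j := by
            refine Finset.sum_congr rfl fun i _ => ?_
            rw [e2, Finset.mul_sum]
            exact Finset.sum_congr rfl fun l _ => (mul_assoc _ _ _).symm
        _ = ∑ l, ∑ i, z i * g i l * v l j := Finset.sum_comm
        _ = ∑ l, z2 l * v l j := by
            refine Finset.sum_congr rfl fun l _ => ?_
            rw [hz2, Finset.sum_mul]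
    rw [h1, h2]
end
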